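/- Let n ≥ 5 and fix τ ∈ [0, cos(2π/5)) with τ ∉ {cos(2π(i−1)/n) : i = 1,…,n}. There exists ε_{n,τ} > 0 such that for every ε ∈ (0, ε_{n,τ}], with φ(t) = ε·log(1 + e^{(t−τ)/ε}) and W = 1_n 1_nᵀ, the regular n-gon configuration X (with x_i = (cos(2π(i−1)/n), sin(2π(i−1)/n))) is critical for f, and the Laplacian L(M) with m_ij = h(x_iᵀx_j), h(t) = tφ'(t) − (1−t²)φ''(t), is positive semidefinite with kernel exactly span(1_n) (i.e., the Hessian of f at X is negative definite modulo the trivial rotational zero mode). -/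

import Mathlib

open Matrix

noncomputable section

/-- Frobenius inner product `⟨A,B⟩ = ∑ᵢⱼ Aᵢⱼ Bᵢⱼ`. -/
def frob {ι κ : Type*} [Fintype ι] [Fintype κ] (A B : Matrix ι κ ℝ) : ℝ :=
  ∑ i, ∑ j, A i j * B i j

/-- `ddiag` zeroes out all off-diagonal entries of a square matrix. -/
def ddiag {ι : Type*} [Fintype ι] [DecidableEq ι] (M : Matrix ι ι ℝ) : Matrix ι ι ℝ :=
  Matrix.diagonal fun i => M i i

/-- Graph Laplacian `L(M) = diag(M 1) − M`. -/
def lap {ι : Type*} [Fintype ι] [DecidableEq ι] (M : Matrix ι ι ℝ) : Matrix ι ι ℝ :=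
  Matrix.diagonal (fun i => ∑ j, M i j) - M

/-- `X` has unit-norm columns. -/
def unitCols {d : ℕ} {ι : Type*} [Fintype ι] (X : Matrix (Fin d) ι ℝ) : Prop :=
  ∀ j, ∑ i, X i j ^ 2 = 1

/-- `A = W ⊙ φ'(XᵀX)` (`d1` playing the role of `φ'`). -/
def Amat {d : ℕ} {ι : Type*} [Fintype ι] (W : Matrix ι ι ℝ) (X : Matrix (Fin d) ι ℝ)
    (d1 : ℝ → ℝ) : Matrix ι ι ℝ :=
  Matrix.hadamard W ((Xᵀ * X).map d1)

/-- `S = ddiag(XᵀXA) − A`. -/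
def Smat {d : ℕ} {ι : Type*} [Fintype ι] [DecidableEq ι] (W : Matrix ι ι ℝ)
    (X : Matrix (Fin d) ι ℝ) (d1 : ℝ → ℝ) : Matrix ι ι ℝ :=
  ddiag ((Xᵀ * X) * Amat W X d1) - Amat W X d1

/-- First-order criticality: `X S = 0`, i.e. `X·ddiag(XᵀXA) = XA`
(vanishing Riemannian gradient on the product of spheres). -/
def IsCritical {d : ℕ} {ι : Type*} [Fintype ι] [DecidableEq ι] (W : Matrix ι ι ℝ)
    (X : Matrix (Fin d) ι ℝ) (d1 : ℝ → ℝ) : Prop :=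
  X * Smat W X d1 = 0

/-- The Riemannian Hessian quadratic form of `f` at `X` is negative semidefinite:
`−⟨ẊᵀẊ, S⟩ + (1/2)⟨(XᵀẊ + ẊᵀX)^{⊙2}, W ⊙ φ''(XᵀX)⟩ ≤ 0` for all tangent `Ẋ`. -/
def HessNegSemidef {d : ℕ} {ι : Type*} [Fintype ι] [DecidableEq ι] (W : Matrix ι ι ℝ)
    (X : Matrix (Fin d) ι ℝ) (d1 d2 : ℝ → ℝ) : Prop :=
  ∀ V : Matrix (Fin d) ι ℝ, (∀ j, (Xᵀ * V) j j = 0) →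
    -(frob (Vᵀ * V) (Smat W X d1))
      + (1 / 2) * frob ((Xᵀ * V + Vᵀ * X).map fun t => t ^ 2)
          (Matrix.hadamard W ((Xᵀ * X).map d2)) ≤ 0

/-- The graph with an edge `{i,j}` whenever `w_ij > 0` is connected. -/
def ConnectedW {ι : Type*} (W : Matrix ι ι ℝ) : Prop :=
  (SimpleGraph.fromRel fun i j => 0 < W i j).Connected

/-- `f(Y) = (1/2)⟨W, φ(YᵀY)⟩`. -/
def fval {d : ℕ} {ι : Type*} [Fintype ι] (W : Matrix ι ι ℝ) (φ : ℝ → ℝ)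
    (Y : Matrix (Fin d) ι ℝ) : ℝ :=
  (1 / 2) * frob W ((Yᵀ * Y).map φ)

/-- `h(t) = tφ'(t) − (1−t²)φ''(t)`. -/
def hfun (d1 d2 : ℝ → ℝ) (t : ℝ) : ℝ := t * d1 t - (1 - t ^ 2) * d2 t

/-- The matrix `M` with `m_ij = w_ij · h(x_iᵀx_j)`. -/
def Mmat {d : ℕ} {ι : Type*} [Fintype ι] (W : Matrix ι ι ℝ) (X : Matrix (Fin d) ι ℝ)
    (d1 d2 : ℝ → ℝ) : Matrix ι ι ℝ :=
  Matrix.of fun i j => W i j * hfun d1 d2 ((Xᵀ * X) i j)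

/-- The kernel of `L` is exactly `span(1)`. -/
def KernelIsConst {ι : Type*} [Fintype ι] [DecidableEq ι] (L : Matrix ι ι ℝ) : Prop :=
  ∀ α : ι → ℝ, L.mulVec α = 0 ↔ ∃ c : ℝ, ∀ k, α k = c

/-- The regular `n`-gon configuration on the unit circle. -/
def ngon (n : ℕ) : Matrix (Fin 2) (Fin n) ℝ :=
  Matrix.of fun a j =>
    if a = 0 then Real.cos (2 * Real.pi * (j : ℝ) / (n : ℝ))
    else Real.sin (2 * Real.pi * (j : ℝ) / (n : ℝ))

/-- The log-sum-exp smoothing `φ_{ε,τ}(t) = ε·log(1 + e^{(t−τ)/ε})` of the ReLU. -/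
def philse (ε τ : ℝ) : ℝ → ℝ := fun t => ε * Real.log (1 + Real.exp ((t - τ) / ε))


open Real

noncomputable section

open Real

lemma cos_shift (n : ℕ) (hn : 0 < n) (x : ℝ) (m : ℤ) :
    Real.cos (2 * π * (x + n * m) / n) = Real.cos (2 * π * x / n) := by
  have hn' : (n:ℝ) ≠ 0 := Nat.cast_ne_zero.mpr hn.ne'
  have : 2 * π * (x + n * m) / n = 2 * π * x / n + m * (2 * π) := by
    field_simp
  rw [this, Real.cos_add_int_mul_two_pi]

lemma sin_shift (n : ℕ) (hn : 0 < n) (x : ℝ) (m : ℤ) :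
    Real.sin (2 * π * (x + n * m) / n) = Real.sin (2 * π * x / n) := by
  have hn' : (n:ℝ) ≠ 0 := Nat.cast_ne_zero.mpr hn.ne'
  have : 2 * π * (x + n * m) / n = 2 * π * x / n + m * (2 * π) := by
    field_simp
  rw [this, Real.sin_add_int_mul_two_pi]

lemma fin_sub_real {n : ℕ} (a b : Fin n) :
    ∃ m : ℤ, (((a - b : Fin n) : Fin n) : ℝ) = (a : ℝ) - (b : ℝ) + n * m := by
  have hd : ((a - b : Fin n) : ℕ) = (n - (b:ℕ) + (a:ℕ)) % n := by
    rw [Fin.sub_def]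
  set x := n - (b:ℕ) + (a:ℕ) with hx
  have h1 : n * (x / n) + x % n = x := Nat.div_add_mod x n
  have hb : (b:ℕ) ≤ n := b.isLt.le
  refine ⟨1 - (x / n : ℕ), ?_⟩
  have h2 : (x:ℝ) = (n:ℝ) - (b:ℕ) + (a:ℕ) := by
    rw [hx]; push_cast [Nat.cast_sub hb]; ring
  have h1' := congrArg (fun z : ℕ => (z:ℝ)) h1
  simp only [Nat.cast_add, Nat.cast_mul] at h1'
  rw [← hd] at h1'
  rw [show (((1 - (x / n : ℕ) : ℤ)) : ℝ) = 1 - ((x / n : ℕ) : ℝ) by norm_cast]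
  linarith [h1', h2]

lemma fin_add_real {n : ℕ} (a b : Fin n) :
    ∃ m : ℤ, (((a + b : Fin n) : Fin n) : ℝ) = (a : ℝ) + (b : ℝ) + n * m := by
  have hd : ((a + b : Fin n) : ℕ) = ((a:ℕ) + (b:ℕ)) % n := Fin.val_add a b
  set x := (a:ℕ) + (b:ℕ) with hx
  have h1 : n * (x / n) + x % n = x := Nat.div_add_mod x n
  refine ⟨-(x / n : ℕ), ?_⟩
  have h1' := congrArg (fun z : ℕ => (z:ℝ)) h1
  simp only [Nat.cast_add, Nat.cast_mul] at h1'
  rw [← hd] at h1'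
  rw [show (((-(x / n : ℕ) : ℤ)) : ℝ) = -((x / n : ℕ) : ℝ) by norm_cast]
  push_cast [hx] at h1'
  linarith [h1']

lemma ngon_gram {n : ℕ} (i j : Fin n) :
    ((ngon n)ᵀ * ngon n) i j = Real.cos (2 * π * ((i:ℝ) - (j:ℝ)) / n) := by
  simp only [Matrix.mul_apply, Matrix.transpose_apply, Fin.sum_univ_two, ngon,
    Matrix.of_apply]
  rw [show 2 * π * ((i:ℝ) - (j:ℝ)) / n = 2 * π * (i:ℝ) / n - 2 * π * (j:ℝ) / n by ring,
    Real.cos_sub]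
  norm_num

lemma sin_sum_zero {n : ℕ} (hn : 0 < n) (j : Fin n) (F : ℝ → ℝ) :
    ∑ k : Fin n, Real.sin (2 * π * ((k:ℝ) - (j:ℝ)) / n)
      * F (Real.cos (2 * π * ((k:ℝ) - (j:ℝ)) / n)) = 0 := by
  set T : Fin n → ℝ := fun k => Real.sin (2 * π * ((k:ℝ) - (j:ℝ)) / n)
      * F (Real.cos (2 * π * ((k:ℝ) - (j:ℝ)) / n)) with hT
  haveI : NeZero n := ⟨hn.ne'⟩
  have hneg : ∀ k : Fin n, T (j + j - k) = - T k := by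
    intro k
    obtain ⟨m₁, hm₁⟩ := fin_sub_real (j + j) k
    obtain ⟨m₂, hm₂⟩ := fin_add_real j j
    have hc : ((j + j - k : Fin n) : ℝ) - (j:ℝ)
        = -((k:ℝ) - (j:ℝ)) + (n:ℝ) * ((m₁ + m₂ : ℤ)) := by
      rw [hm₁, hm₂]; push_cast; ring
    simp only [hT, hc]
    rw [sin_shift n hn _ (m₁ + m₂), cos_shift n hn _ (m₁ + m₂)]
    rw [show 2 * π * (-((k:ℝ) - (j:ℝ))) / n = -(2 * π * ((k:ℝ) - (j:ℝ)) / n) by ring]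
    rw [Real.sin_neg, Real.cos_neg]
    ring
  have hsum : ∑ k, T ((Equiv.subLeft (j + j)) k) = ∑ k, T k :=
    Fintype.sum_equiv (Equiv.subLeft (j + j)) _ _ (fun k => rfl)
  simp only [Equiv.subLeft_apply] at hsum
  have : ∑ k, T (j + j - k) = - ∑ k, T k := by
    rw [← Finset.sum_neg_distrib]
    exact Finset.sum_congr rfl fun k _ => hneg k
  rw [this] at hsum
  linarith [hsum]
lemma ngon_critical {n : ℕ} (hn : 0 < n) (d1 : ℝ → ℝ) :
    IsCritical (Matrix.of fun _ _ => (1 : ℝ)) (ngon n) d1 := by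
  unfold IsCritical
  set X := ngon n with hX
  set W : Matrix (Fin n) (Fin n) ℝ := Matrix.of fun _ _ => (1 : ℝ) with hW
  ext a j
  set ψ : Fin n → ℝ := fun k => 2 * π * ((k:ℝ) - (j:ℝ)) / n with hψ
  have hA : ∀ k l : Fin n, Amat W X d1 k l = d1 ((Xᵀ * X) k l) := by
    intro k l
    simp [Amat, Matrix.hadamard, hW]
  have hGsym : ∀ k : Fin n, (Xᵀ * X) j k = Real.cos (ψ k) := by
    intro k
    rw [hX, ngon_gram]
    rw [show 2 * π * ((j:ℝ) - (k:ℝ)) / n = -(ψ k) by rw [hψ]; ring, Real.cos_neg]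
  have hG : ∀ k : Fin n, (Xᵀ * X) k j = Real.cos (ψ k) := by
    intro k; rw [hX, ngon_gram]
  -- the matrix entry
  have hentry : (X * Smat W X d1) a j
      = X a j * (∑ k, Real.cos (ψ k) * d1 (Real.cos (ψ k)))
        - ∑ k, X a k * d1 (Real.cos (ψ k)) := by
    rw [Matrix.mul_apply]
    have : ∀ k, X a k * Smat W X d1 k j
        = X a k * (if k = j then ((Xᵀ * X) * Amat W X d1) j j else 0)
          - X a k * d1 (Real.cos (ψ k)) := by
      intro k
      rw [Smat, Matrix.sub_apply, ddiag, Matrix.diagonal_apply, hA, hG]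
      by_cases h : k = j <;> simp [h] <;> ring
    rw [Finset.sum_congr rfl fun k _ => this k, Finset.sum_sub_distrib]
    congr 1
    rw [Finset.sum_eq_single j]
    · simp only [if_pos rfl]
      congr 1
      rw [Matrix.mul_apply]
      exact Finset.sum_congr rfl fun k _ => by rw [hGsym, hA, hG]
    · intro k _ hk; simp [hk]
    · intro h; exact absurd (Finset.mem_univ j) h
  rw [hentry]
  -- key trigonometric identity
  have hsin := sin_sum_zero hn j d1
  have hθ : ∀ k : Fin n, 2 * π * (k:ℝ) / n = ψ k + 2 * π * (j:ℝ) / n := by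
    intro k; rw [hψ]; ring
  have key : ∑ k, X a k * d1 (Real.cos (ψ k))
      = X a j * ∑ k, Real.cos (ψ k) * d1 (Real.cos (ψ k)) := by
    fin_cases a
    · show ∑ k, X (0 : Fin 2) k * d1 (Real.cos (ψ k))
          = X (0 : Fin 2) j * ∑ k, Real.cos (ψ k) * d1 (Real.cos (ψ k))
      have e1 : ∀ k : Fin n, X (0 : Fin 2) k * d1 (Real.cos (ψ k))
          = Real.cos (2 * π * (j:ℝ) / n) * (Real.cos (ψ k) * d1 (Real.cos (ψ k)))
            - Real.sin (2 * π * (j:ℝ) / n) * (Real.sin (ψ k) * d1 (Real.cos (ψ k))) := by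
        intro k
        have : X (0 : Fin 2) k = Real.cos (2 * π * (k:ℝ) / n) := by simp [hX, ngon]
        rw [this, hθ k, Real.cos_add]; ring
      rw [Finset.sum_congr rfl fun k _ => e1 k, Finset.sum_sub_distrib,
        ← Finset.mul_sum, ← Finset.mul_sum, hψ] at *
      rw [hsin]
      have : X (0 : Fin 2) j = Real.cos (2 * π * (j:ℝ) / n) := by simp [hX, ngon]
      rw [this]; ring
    · show ∑ k, X (1 : Fin 2) k * d1 (Real.cos (ψ k))
          = X (1 : Fin 2) j * ∑ k, Real.cos (ψ k) * d1 (Real.cos (ψ k))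
      have e1 : ∀ k : Fin n, X (1 : Fin 2) k * d1 (Real.cos (ψ k))
          = Real.sin (2 * π * (j:ℝ) / n) * (Real.cos (ψ k) * d1 (Real.cos (ψ k)))
            + Real.cos (2 * π * (j:ℝ) / n) * (Real.sin (ψ k) * d1 (Real.cos (ψ k))) := by
        intro k
        have : X (1 : Fin 2) k = Real.sin (2 * π * (k:ℝ) / n) := by simp [hX, ngon]
        rw [this, hθ k, Real.sin_add]; ring
      rw [Finset.sum_congr rfl fun k _ => e1 k, Finset.sum_add_distrib,
        ← Finset.mul_sum, ← Finset.mul_sum, hψ] at *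
      rw [hsin]
      have : X (1 : Fin 2) j = Real.sin (2 * π * (j:ℝ) / n) := by simp [hX, ngon]
      rw [this]; ring
  rw [key]
  simp
section philse_lemmas

variable (ε τ : ℝ)

lemma philse_hasDeriv (hε : 0 < ε) (t : ℝ) :
    HasDerivAt (philse ε τ)
      (Real.exp ((t - τ) / ε) / (1 + Real.exp ((t - τ) / ε))) t := by
  have h1 : HasDerivAt (fun t : ℝ => (t - τ) / ε) (1 / ε) t := by
    simpa using ((hasDerivAt_id t).sub_const τ).div_const ε
  have h2 : HasDerivAt (fun t : ℝ => Real.exp ((t - τ) / ε))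
      (Real.exp ((t - τ) / ε) * (1 / ε)) t := h1.exp
  have h3 : HasDerivAt (fun t : ℝ => 1 + Real.exp ((t - τ) / ε))
      (Real.exp ((t - τ) / ε) * (1 / ε)) t := h2.const_add 1
  have hpos : (0:ℝ) < 1 + Real.exp ((t - τ) / ε) := by positivity
  have h4 := (h3.log hpos.ne').const_mul ε
  have : ε * (Real.exp ((t - τ) / ε) * (1 / ε) / (1 + Real.exp ((t - τ) / ε)))
      = Real.exp ((t - τ) / ε) / (1 + Real.exp ((t - τ) / ε)) := by
    field_simp
  rw [this] at h4
  exact h4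

lemma philse_d1 (hε : 0 < ε) :
    deriv (philse ε τ)
      = fun t => Real.exp ((t - τ) / ε) / (1 + Real.exp ((t - τ) / ε)) :=
  funext fun t => (philse_hasDeriv ε τ hε t).deriv

lemma philse_d2 (hε : 0 < ε) :
    deriv (deriv (philse ε τ))
      = fun t => Real.exp ((t - τ) / ε)
          / ((1 + Real.exp ((t - τ) / ε)) ^ 2 * ε) := by
  rw [philse_d1 ε τ hε]
  funext t
  have h1 : HasDerivAt (fun t : ℝ => (t - τ) / ε) (1 / ε) t := by
    simpa using ((hasDerivAt_id t).sub_const τ).div_const ε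
  have h2 : HasDerivAt (fun t : ℝ => Real.exp ((t - τ) / ε))
      (Real.exp ((t - τ) / ε) * (1 / ε)) t := h1.exp
  have h3 : HasDerivAt (fun t : ℝ => 1 + Real.exp ((t - τ) / ε))
      (Real.exp ((t - τ) / ε) * (1 / ε)) t := h2.const_add 1
  have hpos : (0:ℝ) < 1 + Real.exp ((t - τ) / ε) := by positivity
  have h4 := h2.div h3 hpos.ne'
  have : (Real.exp ((t - τ) / ε) * (1 / ε) * (1 + Real.exp ((t - τ) / ε))
        - Real.exp ((t - τ) / ε) * (Real.exp ((t - τ) / ε) * (1 / ε)))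
        / (1 + Real.exp ((t - τ) / ε)) ^ 2
      = Real.exp ((t - τ) / ε) / ((1 + Real.exp ((t - τ) / ε)) ^ 2 * ε) := by
    field_simp; ring
  rw [this] at h4
  exact h4.deriv

/-- `exp (-(a/ε)) ≤ 4 ε² / a²` for `a, ε > 0`. -/
lemma exp_neg_div_le (a : ℝ) (ha : 0 < a) (hε : 0 < ε) :
    Real.exp (-(a / ε)) ≤ 4 * ε ^ 2 / a ^ 2 := by
  have h1 : a / (2 * ε) ≤ Real.exp (a / (2 * ε)) := by
    have := Real.add_one_le_exp (a / (2 * ε))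
    linarith
  have h2 : (a / (2 * ε)) ^ 2 ≤ Real.exp (a / ε) := by
    have : Real.exp (a / ε) = Real.exp (a / (2 * ε)) ^ 2 := by
      rw [← Real.exp_nat_mul]
      · congr 1; field_simp; ring
    rw [this]
    have hb : 0 < a / (2 * ε) := by positivity
    exact pow_le_pow_left₀ hb.le h1 2
  have h3 : (a / (2 * ε)) ^ 2 = a ^ 2 / (4 * ε ^ 2) := by
    field_simp; ring
  rw [h3] at h2
  have hpos2 : (0:ℝ) < a ^ 2 / (4 * ε ^ 2) := by positivity
  rw [Real.exp_neg]
  calc (Real.exp (a / ε))⁻¹ ≤ (a ^ 2 / (4 * ε ^ 2))⁻¹ := by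
        apply inv_anti₀ hpos2 h2
    _ = 4 * ε ^ 2 / a ^ 2 := by rw [inv_div]

/-- Lower bound for `hfun` when `t` is below the threshold. -/
lemma hfun_low (hε : 0 < ε) (hε1 : ε ≤ 1) {t a : ℝ} (ht : |t| ≤ 1)
    (ha : 0 < a) (hlt : t ≤ τ - a) :
    -(8 * ε / a ^ 2) ≤ hfun (deriv (philse ε τ)) (deriv (deriv (philse ε τ))) t := by
  rw [hfun, philse_d2 ε τ hε, philse_d1 ε τ hε]
  beta_reduce
  set e := Real.exp ((t - τ) / ε) with he
  have hepos : 0 < e := Real.exp_pos _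
  have hden : (0:ℝ) < 1 + e := by positivity
  have hebound : e ≤ 4 * ε ^ 2 / a ^ 2 := by
    have h1 : (t - τ) / ε ≤ -(a / ε) := by
      rw [← neg_div]
      gcongr
      linarith
    calc e ≤ Real.exp (-(a / ε)) := Real.exp_le_exp.mpr h1
      _ ≤ 4 * ε ^ 2 / a ^ 2 := exp_neg_div_le ε a ha hε
  have hd1 : e / (1 + e) ≤ e := by
    rw [div_le_iff₀ hden]; nlinarith
  have hd1' : 0 ≤ e / (1 + e) := by positivity
  have hd2 : e / ((1 + e) ^ 2 * ε) ≤ e / ε := by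
    gcongr
    nlinarith [mul_nonneg (by positivity : (0:ℝ) ≤ 2 * e + e ^ 2) hε.le]
  have hd2' : 0 ≤ e / ((1 + e) ^ 2 * ε) := by positivity
  have ht2 : 0 ≤ 1 - t ^ 2 := by nlinarith [abs_le.mp ht]
  have ht2' : 1 - t ^ 2 ≤ 1 := by nlinarith
  have k1 : -(4 * ε ^ 2 / a ^ 2) ≤ t * (e / (1 + e)) := by
    have : |t * (e / (1 + e))| ≤ e := by
      rw [abs_mul]
      calc |t| * |e / (1 + e)| ≤ 1 * (e / (1 + e)) := by
            rw [abs_of_nonneg hd1']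
            exact mul_le_mul_of_nonneg_right ht hd1'
        _ = e / (1 + e) := by ring
        _ ≤ e := hd1
    have := (abs_le.mp this).1
    linarith
  have k2 : (1 - t ^ 2) * (e / ((1 + e) ^ 2 * ε)) ≤ 4 * ε / a ^ 2 := by
    calc (1 - t ^ 2) * (e / ((1 + e) ^ 2 * ε)) ≤ 1 * (e / ε) := by
          apply mul_le_mul ht2' hd2 hd2' zero_le_one
      _ = e / ε := by ring
      _ ≤ (4 * ε ^ 2 / a ^ 2) / ε := by gcongr
      _ = 4 * ε / a ^ 2 := by field_simp
  have final2 : 4 * ε ^ 2 / a ^ 2 ≤ 4 * ε / a ^ 2 := by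
    gcongr
    nlinarith
  set q1 := t * (e / (1 + e))
  set q2 := (1 - t ^ 2) * (e / ((1 + e) ^ 2 * ε))
  set u := 4 * ε / a ^ 2 with hu
  set v := 4 * ε ^ 2 / a ^ 2
  have h8 : 8 * ε / a ^ 2 = u + u := by rw [hu]; ring
  rw [h8]
  linarith

end philse_lemmas
/-- Lower bound for `hfun` when `t` is above the threshold. -/
lemma hfun_high (ε τ : ℝ) (hε : 0 < ε) (hτ0 : 0 ≤ τ) {t a : ℝ} (ht : |t| ≤ 1)
    (ha : 0 < a) (hgt : τ + a ≤ t) :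
    t / 2 - 4 * ε / a ^ 2
      ≤ hfun (deriv (philse ε τ)) (deriv (deriv (philse ε τ))) t := by
  rw [hfun, philse_d2 ε τ hε, philse_d1 ε τ hε]
  beta_reduce
  set e := Real.exp ((t - τ) / ε) with he
  have hepos : 0 < e := Real.exp_pos _
  have hden : (0:ℝ) < 1 + e := by positivity
  have ht1 : t ≤ 1 := (abs_le.mp ht).2
  have ht0 : 0 < t := by nlinarith
  have ht2 : 0 ≤ 1 - t ^ 2 := by nlinarith [(abs_le.mp ht).1]
  have ht2' : 1 - t ^ 2 ≤ 1 := by nlinarith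
  have he1 : 1 ≤ e := by
    rw [he]
    apply Real.one_le_exp
    apply div_nonneg (by linarith) hε.le
  have hd1half : 1 / 2 ≤ e / (1 + e) := by
    rw [div_le_div_iff₀ (by norm_num) hden]
    linarith
  have k1 : t / 2 ≤ t * (e / (1 + e)) := by
    nlinarith [mul_le_mul_of_nonneg_left hd1half ht0.le]
  have hd2' : 0 ≤ e / ((1 + e) ^ 2 * ε) := by positivity
  have hd2 : e / ((1 + e) ^ 2 * ε) ≤ 4 * ε / a ^ 2 := by
    have s1 : e / ((1 + e) ^ 2 * ε) ≤ 1 / (e * ε) := by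
      rw [div_le_div_iff₀ (by positivity) (by positivity)]
      nlinarith [mul_pos hepos hε, hε.le, hepos.le]
    have s2 : 1 / (e * ε) = Real.exp (-((t - τ) / ε)) * (1 / ε) := by
      rw [Real.exp_neg, ← he]
      field_simp
    have s3 : Real.exp (-((t - τ) / ε)) ≤ Real.exp (-(a / ε)) := by
      apply Real.exp_le_exp.mpr
      have : a / ε ≤ (t - τ) / ε := by
        gcongr
        linarith
      linarith
    have s4 : Real.exp (-(a / ε)) ≤ 4 * ε ^ 2 / a ^ 2 := exp_neg_div_le ε a ha hε
    have s5 : Real.exp (-((t - τ) / ε)) * (1 / ε) ≤ (4 * ε ^ 2 / a ^ 2) * (1 / ε) := by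
      apply mul_le_mul_of_nonneg_right (le_trans s3 s4) (by positivity)
    have s6 : (4 * ε ^ 2 / a ^ 2) * (1 / ε) = 4 * ε / a ^ 2 := by
      field_simp
    calc e / ((1 + e) ^ 2 * ε) ≤ 1 / (e * ε) := s1
      _ = Real.exp (-((t - τ) / ε)) * (1 / ε) := s2
      _ ≤ (4 * ε ^ 2 / a ^ 2) * (1 / ε) := s5
      _ = 4 * ε / a ^ 2 := s6
  have k2 : (1 - t ^ 2) * (e / ((1 + e) ^ 2 * ε)) ≤ 4 * ε / a ^ 2 := by
    calc (1 - t ^ 2) * (e / ((1 + e) ^ 2 * ε)) ≤ 1 * (e / ((1 + e) ^ 2 * ε)) :=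
          mul_le_mul_of_nonneg_right ht2' hd2'
      _ = e / ((1 + e) ^ 2 * ε) := by ring
      _ ≤ 4 * ε / a ^ 2 := hd2
  set q1 := t * (e / (1 + e))
  set q2 := (1 - t ^ 2) * (e / ((1 + e) ^ 2 * ε))
  set u := 4 * ε / a ^ 2
  linarith
section quadform

lemma lap_mulVec_apply {n : ℕ} (M : Matrix (Fin n) (Fin n) ℝ) (x : Fin n → ℝ) (i : Fin n) :
    ((lap M).mulVec x) i = (∑ j, M i j) * x i - ∑ j, M i j * x j := by
  simp [lap, Matrix.sub_mulVec, Matrix.mulVec, dotProduct, sub_mul,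
    Finset.sum_sub_distrib, Matrix.diagonal_apply, Finset.sum_ite_eq,
    Finset.sum_mul]

lemma lap_quadform {n : ℕ} (M : Matrix (Fin n) (Fin n) ℝ)
    (hsym : ∀ i j, M i j = M j i) (x : Fin n → ℝ) :
    x ⬝ᵥ (lap M).mulVec x = (1 / 2) * ∑ i, ∑ j, M i j * (x i - x j) ^ 2 := by
  have hv : ∀ i, ((lap M).mulVec x) i = (∑ j, M i j) * x i - ∑ j, M i j * x j :=
    lap_mulVec_apply M x
  have h1 : ∀ i, x i * (((lap M).mulVec x) i)
      = ∑ j, (M i j * (x i * x i) - M i j * (x i * x j)) := by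
    intro i
    rw [hv i, Finset.sum_sub_distrib, mul_sub]
    congr 1
    · rw [Finset.sum_mul, Finset.mul_sum]
      exact Finset.sum_congr rfl fun j _ => by ring
    · rw [Finset.mul_sum]
      exact Finset.sum_congr rfl fun j _ => by ring
  have hdot : x ⬝ᵥ (lap M).mulVec x
      = ∑ i, ∑ j, (M i j * (x i * x i) - M i j * (x i * x j)) := by
    rw [dotProduct]
    exact Finset.sum_congr rfl fun i _ => h1 i
  have h2 : ∑ i, ∑ j, M i j * (x i - x j) ^ 2
      = ∑ i, ∑ j, (M i j * (x i * x i) - 2 * (M i j * (x i * x j)) + M i j * (x j * x j)) :=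
    Finset.sum_congr rfl fun i _ => Finset.sum_congr rfl fun j _ => by ring
  have h3 : (∑ i, ∑ j, M i j * (x j * x j)) = ∑ i, ∑ j, M i j * (x i * x i) := by
    rw [Finset.sum_comm]
    exact Finset.sum_congr rfl fun i _ => Finset.sum_congr rfl fun j _ => by rw [hsym i j]
  have h4 : (∑ i, ∑ j, (M i j * (x i * x i) - 2 * (M i j * (x i * x j)) + M i j * (x j * x j)))
      = (∑ i, ∑ j, M i j * (x i * x i)) - 2 * (∑ i, ∑ j, M i j * (x i * x j))
        + ∑ i, ∑ j, M i j * (x j * x j) := by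
    simp [Finset.sum_add_distrib, Finset.sum_sub_distrib, Finset.mul_sum]
  have h5 : (∑ i, ∑ j, (M i j * (x i * x i) - M i j * (x i * x j)))
      = (∑ i, ∑ j, M i j * (x i * x i)) - ∑ i, ∑ j, M i j * (x i * x j) := by
    simp [Finset.sum_sub_distrib]
  rw [hdot, h5, h2, h4, h3]
  ring

/-- Telescoping/Cauchy-Schwarz: any squared difference is controlled by the sum of
squared consecutive (cyclic) differences. -/
lemma sq_diff_le {n : ℕ} [NeZero n] (x : Fin n → ℝ) (i j : Fin n) :
    (x i - x j) ^ 2 ≤ n * ∑ k : Fin n, (x k - x (k + 1)) ^ 2 := by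
  have hn : 0 < n := Nat.pos_of_ne_zero (NeZero.ne n)
  set E := ∑ k : Fin n, (x k - x (k + 1)) ^ 2 with hE
  have hE0 : 0 ≤ E := Finset.sum_nonneg fun k _ => sq_nonneg _
  wlog hij : (i : ℕ) ≤ (j : ℕ) generalizing i j
  · have := this j i (le_of_not_ge hij)
    calc (x i - x j) ^ 2 = (x j - x i) ^ 2 := by ring
      _ ≤ n * E := this
  set y : ℕ → ℝ := fun k => x ⟨k % n, Nat.mod_lt _ hn⟩ with hy
  have hyx : ∀ m : Fin n, y (m : ℕ) = x m := by
    intro m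
    simp only [hy]
    congr 1
    exact Fin.eq_of_val_eq (by simp [Nat.mod_eq_of_lt m.isLt])
  have hstep : ∀ k : ℕ, y (k + 1) = x ((⟨k % n, Nat.mod_lt _ hn⟩ : Fin n) + 1) := by
    intro k
    simp only [hy]
    congr 1
    apply Fin.eq_of_val_eq
    rw [Fin.val_add]
    simp only [Fin.val_one', Fin.val_mk]
    exact Nat.add_mod k 1 n
  have htel : x j - x i = ∑ k ∈ Finset.Ico (i : ℕ) (j : ℕ), (y (k + 1) - y k) := by
    rw [Finset.sum_Ico_eq_sub _ hij, Finset.sum_range_sub (f := y),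
      Finset.sum_range_sub (f := y), hyx j, hyx i]
    ring
  have hcs : (x j - x i) ^ 2
      ≤ ((j : ℕ) - (i : ℕ) : ℕ) * ∑ k ∈ Finset.Ico (i : ℕ) (j : ℕ), (y (k + 1) - y k) ^ 2 := by
    rw [htel]
    have := sq_sum_le_card_mul_sum_sq (s := Finset.Ico (i : ℕ) (j : ℕ))
      (f := fun k => y (k + 1) - y k)
    simpa [Nat.card_Ico] using this
  have hsub : ∑ k ∈ Finset.Ico (i : ℕ) (j : ℕ), (y (k + 1) - y k) ^ 2 ≤ E := by
    have himg : ∑ k ∈ Finset.Ico (i : ℕ) (j : ℕ), (y (k + 1) - y k) ^ 2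
        = ∑ m ∈ (Finset.Ico (i : ℕ) (j : ℕ)).image
            (fun k => (⟨k % n, Nat.mod_lt _ hn⟩ : Fin n)), (x m - x (m + 1)) ^ 2 := by
      rw [Finset.sum_image]
      · refine Finset.sum_congr rfl fun k hk => ?_
        rw [hstep k]
        have : y k = x (⟨k % n, Nat.mod_lt _ hn⟩ : Fin n) := rfl
        rw [this]
        ring
      · intro k1 h1 k2 h2 heq
        have hk1 : k1 < n := lt_of_lt_of_le (Finset.mem_Ico.mp h1).2 j.isLt.le
        have hk2 : k2 < n := lt_of_lt_of_le (Finset.mem_Ico.mp h2).2 j.isLt.le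
        have := congrArg Fin.val heq
        simpa [Nat.mod_eq_of_lt hk1, Nat.mod_eq_of_lt hk2] using this
    rw [himg, hE]
    exact Finset.sum_le_sum_of_subset_of_nonneg (Finset.subset_univ _)
      (fun m _ _ => sq_nonneg _)
  have hcard : (((j : ℕ) - (i : ℕ) : ℕ) : ℝ) ≤ (n : ℝ) := by
    have : (j : ℕ) - (i : ℕ) ≤ n := by omega
    exact_mod_cast this
  have hIconneg : 0 ≤ ∑ k ∈ Finset.Ico (i : ℕ) (j : ℕ), (y (k + 1) - y k) ^ 2 :=
    Finset.sum_nonneg fun k _ => sq_nonneg _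
  calc (x i - x j) ^ 2 = (x j - x i) ^ 2 := by ring
    _ ≤ ((j : ℕ) - (i : ℕ) : ℕ) * ∑ k ∈ Finset.Ico (i : ℕ) (j : ℕ), (y (k + 1) - y k) ^ 2 :=
        hcs
    _ ≤ n * E := mul_le_mul hcard hsub hIconneg (Nat.cast_nonneg n)

end quadform
section psd

lemma lap_psd_kernel {n : ℕ} [NeZero n] (M : Matrix (Fin n) (Fin n) ℝ)
    (hsym : ∀ i j, M i j = M j i) (c : ℝ) (hc : 0 < c)
    (hneigh : ∀ i : Fin n, c ≤ M i (i + 1))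
    (hoff : ∀ i j : Fin n, i ≠ j → -(c / (2 * (n:ℝ) ^ 3)) ≤ M i j) :
    (lap M).PosSemidef ∧ KernelIsConst (lap M) := by
  have hn : 0 < n := Nat.pos_of_ne_zero (NeZero.ne n)
  have hnR : (0:ℝ) < (n:ℝ) := by exact_mod_cast hn
  set δ : ℝ := c / (2 * (n:ℝ) ^ 3) with hδ
  have hδpos : 0 ≤ δ := by positivity
  -- the key coercivity estimate
  have key : ∀ x : Fin n → ℝ,
      c / 4 * (∑ k : Fin n, (x k - x (k + 1)) ^ 2) ≤ x ⬝ᵥ (lap M).mulVec x := by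
    intro x
    set E := ∑ k : Fin n, (x k - x (k + 1)) ^ 2 with hE
    have hE0 : 0 ≤ E := Finset.sum_nonneg fun k _ => sq_nonneg _
    have hsq : ∀ i j, (x i - x j) ^ 2 ≤ n * E := fun i j => sq_diff_le x i j
    have inner : ∀ i : Fin n,
        c * (x i - x (i + 1)) ^ 2 - δ * ((n:ℝ) * ((n:ℝ) * E))
          ≤ ∑ j, M i j * (x i - x j) ^ 2 := by
      intro i
      rw [← Finset.add_sum_erase _ _ (Finset.mem_univ (i + 1))]
      have t1 : c * (x i - x (i + 1)) ^ 2 ≤ M i (i + 1) * (x i - x (i + 1)) ^ 2 :=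
        mul_le_mul_of_nonneg_right (hneigh i) (sq_nonneg _)
      have s1 : ∑ j ∈ Finset.univ.erase (i + 1), (x i - x j) ^ 2
          ≤ (n:ℝ) * ((n:ℝ) * E) := by
        calc ∑ j ∈ Finset.univ.erase (i + 1), (x i - x j) ^ 2
            ≤ ∑ j : Fin n, (x i - x j) ^ 2 :=
              Finset.sum_le_sum_of_subset_of_nonneg (Finset.subset_univ _)
                (fun j _ _ => sq_nonneg _)
          _ ≤ ∑ _j : Fin n, (n:ℝ) * E := Finset.sum_le_sum fun j _ => hsq i j
          _ = (n:ℝ) * ((n:ℝ) * E) := by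
              rw [Finset.sum_const, Finset.card_univ, Fintype.card_fin, nsmul_eq_mul]
      have s2 : ∑ j ∈ Finset.univ.erase (i + 1), (-δ) * (x i - x j) ^ 2
          ≤ ∑ j ∈ Finset.univ.erase (i + 1), M i j * (x i - x j) ^ 2 := by
        refine Finset.sum_le_sum fun j hj => ?_
        by_cases h : j = i
        · subst h; simp
        · exact mul_le_mul_of_nonneg_right (hoff i j (fun hh => h hh.symm)) (sq_nonneg _)
      have s3 : -(δ * ((n:ℝ) * ((n:ℝ) * E)))
          ≤ ∑ j ∈ Finset.univ.erase (i + 1), (-δ) * (x i - x j) ^ 2 := by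
        have h4 := mul_le_mul_of_nonneg_left s1 hδpos
        have h5 : ∑ j ∈ Finset.univ.erase (i + 1), (-δ) * (x i - x j) ^ 2
            = -(δ * ∑ j ∈ Finset.univ.erase (i + 1), (x i - x j) ^ 2) := by
          rw [← Finset.mul_sum]; ring
        rw [h5]
        linarith
      linarith [le_trans s3 s2]
    have total : c * E - (n:ℝ) * (δ * ((n:ℝ) * ((n:ℝ) * E)))
        ≤ ∑ i : Fin n, ∑ j : Fin n, M i j * (x i - x j) ^ 2 := by
      have := Finset.sum_le_sum fun i (_ : i ∈ Finset.univ) => inner i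
      calc c * E - (n:ℝ) * (δ * ((n:ℝ) * ((n:ℝ) * E)))
          = ∑ i : Fin n, (c * (x i - x (i + 1)) ^ 2 - δ * ((n:ℝ) * ((n:ℝ) * E))) := by
            rw [Finset.sum_sub_distrib, ← Finset.mul_sum, ← hE, Finset.sum_const,
              Finset.card_univ, Fintype.card_fin, nsmul_eq_mul]
        _ ≤ _ := this
    have hhalf : c * E - (n:ℝ) * (δ * ((n:ℝ) * ((n:ℝ) * E))) = c / 2 * E := by
      rw [hδ]
      field_simp
      ring
    rw [lap_quadform M hsym x]
    rw [hhalf] at total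
    linarith
  -- Hermitian
  have herm : (lap M).IsHermitian := by
    show (lap M)ᴴ = lap M
    ext i j
    simp only [Matrix.conjTranspose_apply, Matrix.sub_apply, lap, Matrix.diagonal_apply,
      star_trivial]
    by_cases h : i = j
    · subst h; simp
    · rw [if_neg (fun hh => h hh.symm), if_neg h, hsym j i]
  constructor
  · refine Matrix.PosSemidef.of_dotProduct_mulVec_nonneg herm fun x => ?_
    have hstar : star x = x := by funext k; simp
    rw [hstar]
    have h0 : 0 ≤ c / 4 * (∑ k : Fin n, (x k - x (k + 1)) ^ 2) := by
      apply mul_nonneg (by positivity) (Finset.sum_nonneg fun k _ => sq_nonneg _)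
    exact le_trans h0 (key x)
  · intro α
    constructor
    · intro h0
      have hq : α ⬝ᵥ (lap M).mulVec α = 0 := by rw [h0, dotProduct_zero]
      have hE0 : 0 ≤ ∑ k : Fin n, (α k - α (k + 1)) ^ 2 :=
        Finset.sum_nonneg fun k _ => sq_nonneg _
      have hEzero : ∑ k : Fin n, (α k - α (k + 1)) ^ 2 = 0 := by
        have := key α
        rw [hq] at this
        nlinarith
      have hterm : ∀ k : Fin n, (α k - α (k + 1)) ^ 2 = 0 := by
        intro k
        have := (Finset.sum_eq_zero_iff_of_nonneg
          (fun k (_ : k ∈ Finset.univ) => sq_nonneg (α k - α (k + 1)))).mp hEzero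
        exact this k (Finset.mem_univ k)
      have hstep : ∀ k : Fin n, α (k + 1) = α k := by
        intro k
        have := pow_eq_zero_iff (n := 2) (by norm_num) |>.mp (hterm k)
        linarith [sub_eq_zero.mp this]
      refine ⟨α 0, ?_⟩
      have haux : ∀ m : ℕ, ∀ hm : m < n, α ⟨m, hm⟩ = α 0 := by
        intro m
        induction m with
        | zero => intro hm; congr
        | succ p ih =>
          intro hm
          have hp : p < n := by omega
          have : (⟨p + 1, hm⟩ : Fin n) = (⟨p, hp⟩ : Fin n) + 1 := by
            apply Fin.eq_of_val_eq
            rw [Fin.val_add]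
            simp only [Fin.val_one', Fin.val_mk]
            have h1n : 1 % n = 1 := Nat.mod_eq_of_lt (by omega)
            rw [h1n]
            exact (Nat.mod_eq_of_lt hm).symm
          rw [this, hstep, ih hp]
      intro k
      have := haux (k : ℕ) k.isLt
      simpa [Fin.eta] using this
    · rintro ⟨c0, hc0⟩
      funext i
      rw [Pi.zero_apply, lap_mulVec_apply]
      have : ∑ j, M i j * α j = (∑ j, M i j) * c0 := by
        rw [Finset.sum_mul]
        exact Finset.sum_congr rfl fun j _ => by rw [hc0 j]
      rw [this, hc0 i]
      ring

end psd
lemma ngon_gram_fin {n : ℕ} (hn : 0 < n) (i j : Fin n) :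
    ((ngon n)ᵀ * ngon n) i j = Real.cos (2 * π * (((i - j : Fin n)) : ℝ) / n) := by
  obtain ⟨m, hm⟩ := fin_sub_real i j
  rw [ngon_gram, hm, cos_shift n hn _ m]

lemma ngon_gram_symm {n : ℕ} (i j : Fin n) :
    ((ngon n)ᵀ * ngon n) i j = ((ngon n)ᵀ * ngon n) j i := by
  rw [ngon_gram, ngon_gram,
    show 2 * π * ((j:ℝ) - (i:ℝ)) / n = -(2 * π * ((i:ℝ) - (j:ℝ)) / n) by ring,
    Real.cos_neg]

lemma ngon_gram_neighbor {n : ℕ} [NeZero n] (hn5 : 5 ≤ n) (i : Fin n) :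
    ((ngon n)ᵀ * ngon n) i (i + 1) = Real.cos (2 * π / n) := by
  have hn0 : 0 < n := by omega
  obtain ⟨m, hm⟩ := fin_add_real i 1
  have h1v : ((1 : Fin n) : ℕ) = 1 := by
    rw [Fin.val_one']
    exact Nat.mod_eq_of_lt (by omega)
  have h1c : ((1 : Fin n) : ℝ) = 1 := by exact_mod_cast congrArg (Nat.cast : ℕ → ℝ) h1v
  rw [ngon_gram]
  have hd : (i:ℝ) - ((i + 1 : Fin n) : ℝ) = (-1 : ℝ) + (n:ℝ) * (-m : ℤ) := by
    rw [hm, h1c]; push_cast; ring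
  rw [hd, cos_shift n hn0 (-1) (-m),
    show 2 * π * (-1) / n = -(2 * π / n) by ring, Real.cos_neg]

set_option maxHeartbeats 1000000 in
/-- Lemma 4: for small enough `ε`, with the smoothed ReLU `φ_{ε,τ}`, the
regular `n`-gon remains critical with Laplacian `L(M)` positive semidefinite of kernel
exactly span(1). -/
theorem ngon_spurious_for_smoothed_relu
    {n : ℕ} (hn : 5 ≤ n)
    (τ : ℝ) (hτ0 : 0 ≤ τ) (hτ1 : τ < Real.cos (2 * Real.pi / 5))
    (hτne : ∀ i : Fin n, τ ≠ Real.cos (2 * Real.pi * (i : ℝ) / (n : ℝ))) :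
    ∃ ε₀ : ℝ, 0 < ε₀ ∧ ∀ ε : ℝ, 0 < ε → ε ≤ ε₀ →
      IsCritical (Matrix.of fun _ _ => (1 : ℝ)) (ngon n) (deriv (philse ε τ)) ∧
      (lap (Mmat (Matrix.of fun _ _ => (1 : ℝ)) (ngon n)
        (deriv (philse ε τ)) (deriv (deriv (philse ε τ))))).PosSemidef ∧
      KernelIsConst (lap (Mmat (Matrix.of fun _ _ => (1 : ℝ)) (ngon n)
        (deriv (philse ε τ)) (deriv (deriv (philse ε τ))))) := by
  haveI : NeZero n := ⟨by omega⟩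
  haveI : Nonempty (Fin n) := ⟨⟨0, by omega⟩⟩
  have hn0 : 0 < n := by omega
  have hnR : (0:ℝ) < (n:ℝ) := by exact_mod_cast hn0
  have hcos25pos : 0 < Real.cos (2 * π / 5) := by
    apply Real.cos_pos_of_mem_Ioo
    constructor
    · nlinarith [Real.pi_pos]
    · nlinarith [Real.pi_pos]
  set c : ℝ := Real.cos (2 * π / 5) / 4 with hc
  have hcpos : 0 < c := by positivity
  set δ : ℝ := c / (2 * (n:ℝ) ^ 3) with hδ
  have hδpos : 0 < δ := by positivity
  set Amin : ℝ := Finset.univ.inf' Finset.univ_nonempty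
    (fun r : Fin n => |Real.cos (2 * π * (r : ℝ) / n) - τ|) with hAm
  have hAminpos : 0 < Amin := by
    rw [hAm, Finset.lt_inf'_iff]
    intro r _
    exact abs_pos.mpr (sub_ne_zero.mpr fun h => hτne r h.symm)
  have hAle : ∀ r : Fin n, Amin ≤ |Real.cos (2 * π * (r : ℝ) / n) - τ| :=
    fun r => Finset.inf'_le _ (Finset.mem_univ r)
  clear_value Amin
  refine ⟨min 1 (min (c * Amin ^ 2 / 4) (min (Amin ^ 3 / 8) (δ * Amin ^ 2 / 8))),
    by positivity, ?_⟩
  intro ε hε hεle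
  have hε1 : ε ≤ 1 := le_trans hεle (min_le_left _ _)
  have hεc : ε ≤ c * Amin ^ 2 / 4 :=
    le_trans hεle (le_trans (min_le_right _ _) (min_le_left _ _))
  have hεA : ε ≤ Amin ^ 3 / 8 :=
    le_trans hεle (le_trans (min_le_right _ _) (le_trans (min_le_right _ _) (min_le_left _ _)))
  have hεδ : ε ≤ δ * Amin ^ 2 / 8 :=
    le_trans hεle (le_trans (min_le_right _ _) (le_trans (min_le_right _ _) (min_le_right _ _)))
  refine ⟨ngon_critical hn0 _, ?_⟩
  -- entry description of M
  set M := Mmat (Matrix.of fun _ _ => (1 : ℝ)) (ngon n)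
    (deriv (philse ε τ)) (deriv (deriv (philse ε τ))) with hM
  have hMentry : ∀ i j : Fin n, M i j
      = hfun (deriv (philse ε τ)) (deriv (deriv (philse ε τ))) (((ngon n)ᵀ * ngon n) i j) := by
    intro i j
    simp [hM, Mmat]
  have hMsym : ∀ i j : Fin n, M i j = M j i := by
    intro i j
    rw [hMentry, hMentry, ngon_gram_symm i j]
  -- neighbor bound
  have hneigh : ∀ i : Fin n, c ≤ M i (i + 1) := by
    intro i
    rw [hMentry, ngon_gram_neighbor hn i]
    set t : ℝ := Real.cos (2 * π / n) with htdef
    have ht1 : |t| ≤ 1 := Real.abs_cos_le_one _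
    have htge : Real.cos (2 * π / 5) ≤ t := by
      rw [htdef]
      apply Real.cos_le_cos_of_nonneg_of_le_pi (by positivity)
      · nlinarith [Real.pi_pos]
      · apply div_le_div_of_nonneg_left (by positivity) (by norm_num)
        exact_mod_cast hn
    have hgap : Amin ≤ |t - τ| := by
      have h2 := ngon_gram_fin hn0 i (i + 1)
      have h3 := ngon_gram_neighbor hn i
      have : Real.cos (2 * π * (((i - (i + 1) : Fin n)) : ℝ) / n) = t := by
        rw [← h2, h3]
      rw [← this]
      exact hAle (i - (i + 1))
    have htτ : τ + Amin ≤ t := by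
      have habs : |t - τ| = t - τ := abs_of_pos (by linarith)
      rw [habs] at hgap
      linarith
    have hkey := hfun_high ε τ hε hτ0 ht1 hAminpos htτ
    have hd : 4 * ε / Amin ^ 2 ≤ c := by
      rw [div_le_iff₀ (by positivity)]
      nlinarith
    have : 4 * c ≤ t := by rw [hc] at *; linarith
    linarith
  -- off-diagonal bound
  have hoff : ∀ i j : Fin n, i ≠ j → -(c / (2 * (n:ℝ) ^ 3)) ≤ M i j := by
    intro i j hij
    rw [← hδ, hMentry, ngon_gram_fin hn0 i j]
    set t : ℝ := Real.cos (2 * π * (((i - j : Fin n)) : ℝ) / n) with htdef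
    have ht1 : |t| ≤ 1 := Real.abs_cos_le_one _
    have hgap : Amin ≤ |t - τ| := hAle (i - j)
    rcases le_or_gt t τ with hle | hlt
    · have habs : |t - τ| = τ - t := by
        rw [abs_of_nonpos (by linarith)]; ring
      rw [habs] at hgap
      have hkey := hfun_low ε τ hε hε1 ht1 hAminpos (by linarith : t ≤ τ - Amin)
      have hd : 8 * ε / Amin ^ 2 ≤ δ := by
        rw [div_le_iff₀ (by positivity)]
        nlinarith
      linarith
    · have habs : |t - τ| = t - τ := abs_of_pos (by linarith)
      rw [habs] at hgap
      have hkey := hfun_high ε τ hε hτ0 ht1 hAminpos (by linarith : τ + Amin ≤ t)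
      have hd : 4 * ε / Amin ^ 2 ≤ Amin / 2 := by
        rw [div_le_iff₀ (by positivity)]
        nlinarith
      have htA : Amin ≤ t := by linarith
      linarith
  exact lap_psd_kernel M hMsym c hcpos hneigh hoff
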